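/- Let Z be an admissible space, E a topological VE-space over Z, F a VH-space over Z, and S₀(Z) ⊆ S_*(Z) a generating family of continuous increasing *-seminorms. Then the space L_b(E,F,S₀(Z)) of S₀(Z)-bounded linear operators T : E → F is complete in the locally convex topology given by the seminorms p̄ (p ∈ S₀(Z)): every net of S₀(Z)-bounded operators that is Cauchy with respect to every p̄ converges, in every seminorm p̄, to an S₀(Z)-bounded linear operator. -/

import Mathlib

open scoped ComplexConjugate Topology

/-- The data of an ordered `*`-space structure on a complex vector space `Z`:
a conjugate-linear involution and a strict convex cone of selfadjoint elements. -/
structure OrderedStarData (Z : Type*) [AddCommGroup Z] [Module ℂ Z] where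
  star : Z → Z
  star_add : ∀ x y : Z, star (x + y) = star x + star y
  star_smul : ∀ (c : ℂ) (x : Z), star (c • x) = (starRingEnd ℂ) c • star x
  star_star : ∀ x : Z, star (star x) = x
  cone : Set Z
  cone_zero : (0 : Z) ∈ cone
  cone_add : ∀ x ∈ cone, ∀ y ∈ cone, x + y ∈ cone
  cone_smul : ∀ r : ℝ, 0 ≤ r → ∀ x ∈ cone, (r : ℂ) • x ∈ cone
  cone_strict : ∀ x ∈ cone, -x ∈ cone → x = 0
  cone_star : ∀ x ∈ cone, star x = x

namespace OrderedStarData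

variable {Z : Type*} [AddCommGroup Z] [Module ℂ Z]

/-- A seminorm is increasing when `0 ≤ x ≤ y` implies `p x ≤ p y`. -/
def Increasing (D : OrderedStarData Z) (p : Seminorm ℂ Z) : Prop :=
  ∀ x y : Z, x ∈ D.cone → y - x ∈ D.cone → p x ≤ p y

/-- A `*`-seminorm: `p (z*) = p z`. -/
def StarSeminorm (D : OrderedStarData Z) (p : Seminorm ℂ Z) : Prop :=
  ∀ z : Z, p (D.star z) = p z

end OrderedStarData

/-- A topologically ordered `*`-space: an ordered `*`-space with a Hausdorff locally convex
topology generated by a family of increasing seminorms, continuous involution and closed cone. -/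
structure TopOrderedStarSpace (Z : Type*) [AddCommGroup Z] [Module ℂ Z]
    [TopologicalSpace Z] extends OrderedStarData Z where
  t2 : T2Space Z
  star_continuous : Continuous star
  cone_closed : IsClosed cone
  seminorms_generate : ∃ (ι : Type) (hι : Nonempty ι) (q : ι → Seminorm ℂ Z),
      (∀ i, ∀ x y : Z, x ∈ cone → y - x ∈ cone → q i x ≤ q i y) ∧
      (letI := hι; WithSeminorms q)

namespace TopOrderedStarSpace

variable {Z : Type*} [AddCommGroup Z] [Module ℂ Z] [TopologicalSpace Z]

/-- Membership in `S_*(Z)`, the set of continuous increasing `*`-seminorms. -/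
def MemSStar (D : TopOrderedStarSpace Z) (p : Seminorm ℂ Z) : Prop :=
  Continuous ⇑p ∧ D.toOrderedStarData.Increasing p ∧ D.toOrderedStarData.StarSeminorm p

end TopOrderedStarSpace

/-- The topology of `Z` is generated by the family of seminorms `S`. -/
def GeneratesTopology {Z : Type*} [AddCommGroup Z] [Module ℂ Z] [TopologicalSpace Z]
    (S : Set (Seminorm ℂ Z)) : Prop :=
  ∃ h : Nonempty ↥S, letI := h; WithSeminorms (fun p : ↥S => (p : Seminorm ℂ Z))

/-- A `Z`-valued gramian (vector valued inner product) on `E`, making `E` a VE-space over `Z`. -/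
structure Gramian {Z : Type*} [AddCommGroup Z] [Module ℂ Z] (D : OrderedStarData Z)
    (E : Type*) [AddCommGroup E] [Module ℂ E] where
  inner : E → E → Z
  inner_self_mem : ∀ x : E, inner x x ∈ D.cone
  inner_self_eq_zero : ∀ x : E, inner x x = 0 → x = 0
  inner_herm : ∀ x y : E, inner x y = D.star (inner y x)
  inner_add_right : ∀ x y₁ y₂ : E, inner x (y₁ + y₂) = inner x y₁ + inner x y₂
  inner_smul_right : ∀ (a : ℂ) (x y : E), inner x (a • y) = a • inner x y

namespace Gramian

variable {Z : Type*} [AddCommGroup Z] [Module ℂ Z] {D : OrderedStarData Z}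
  {E : Type*} [AddCommGroup E] [Module ℂ E]
  {F : Type*} [AddCommGroup F] [Module ℂ F]

/-- The seminorm `p̃ x = p ([x,x])^{1/2}` induced on a VE-space by a seminorm on `Z`. -/
noncomputable def tilde (B : Gramian D E) (p : Seminorm ℂ Z) (x : E) : ℝ :=
  Real.sqrt (p (B.inner x x))

/-- `S` is an adjoint of `T` : `[Tx, y] = [x, Sy]`. -/
def IsAdjoint (BE : Gramian D E) (BF : Gramian D F) (T : E →ₗ[ℂ] F) (S : F →ₗ[ℂ] E) : Prop :=
  ∀ (x : E) (y : F), BF.inner (T x) y = BE.inner x (S y)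

/-- `T` is adjointable. -/
def Adjointable (BE : Gramian D E) (BF : Gramian D F) (T : E →ₗ[ℂ] F) : Prop :=
  ∃ S : F →ₗ[ℂ] E, BE.IsAdjoint BF T S

/-- `T` is bounded for the seminorm `p` : `p̃ (Tx) ≤ C p̃ x`. -/
def BoundedFor (BE : Gramian D E) (BF : Gramian D F) (T : E →ₗ[ℂ] F) (p : Seminorm ℂ Z) : Prop :=
  ∃ C : ℝ, 0 ≤ C ∧ ∀ x : E, BF.tilde p (T x) ≤ C * BE.tilde p x

/-- The operator seminorm `p̄ T`, the infimum of the admissible bounds. -/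
noncomputable def opSeminorm (BE : Gramian D E) (BF : Gramian D F) (T : E →ₗ[ℂ] F)
    (p : Seminorm ℂ Z) : ℝ :=
  sInf {C : ℝ | 0 ≤ C ∧ ∀ x : E, BF.tilde p (T x) ≤ C * BE.tilde p x}

/-- The topology of `E` is the one of a topological VE-space: it is generated by the
seminorms `p̃` for `p ∈ S`. -/
def IsVETopology [TopologicalSpace E] (B : Gramian D E) (S : Set (Seminorm ℂ Z)) : Prop :=
  ∃ h : Nonempty ↥S, letI := h;
    ∃ q : ↥S → Seminorm ℂ E, (∀ (p : ↥S) (x : E), q p x = B.tilde p.1 x) ∧ WithSeminorms q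

end Gramian

/-- A barrel: a closed, absorbent, balanced, convex set. -/
def IsBarrel {E : Type*} [AddCommGroup E] [Module ℂ E] [TopologicalSpace E] (s : Set E) : Prop :=
  IsClosed s ∧ Absorbent ℂ s ∧ Balanced ℂ s ∧ Convex ℝ s

/-- A (complex) topological vector space is barrelled if every barrel is a neighbourhood of `0`. -/
def BarrelledSp (E : Type*) [AddCommGroup E] [Module ℂ E] [TopologicalSpace E] : Prop :=
  ∀ s : Set E, IsBarrel s → s ∈ 𝓝 (0 : E)

/-- A barrel with respect to the topology of a norm function `N`. -/
def IsBarrelWrtNorm {V : Type*} [AddCommGroup V] [Module ℂ V] (N : V → ℝ) (s : Set V) : Prop :=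
  (∀ x : V, (∀ ε : ℝ, 0 < ε → ∃ y ∈ s, N (x - y) < ε) → x ∈ s) ∧
  Absorbent ℂ s ∧ Balanced ℂ s ∧ Convex ℝ s

/-- Barrelledness with respect to the topology of a norm function `N`. -/
def BarrelledWrtNorm {V : Type*} [AddCommGroup V] [Module ℂ V] (N : V → ℝ) : Prop :=
  ∀ s : Set V, IsBarrelWrtNorm N s → ∃ ε : ℝ, 0 < ε ∧ ∀ x : V, N x < ε → x ∈ s

/-- The kernel of a seminorm, as a submodule. -/
def semKer {Z : Type*} [AddCommGroup Z] [Module ℂ Z] (p : Seminorm ℂ Z) : Submodule ℂ Z where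
  carrier := {z | p z = 0}
  add_mem' := by
    intro a b ha hb
    simp only [Set.mem_setOf_eq] at ha hb ⊢
    exact le_antisymm ((map_add_le_add p a b).trans (by simp [ha, hb])) (apply_nonneg p _)
  zero_mem' := map_zero p
  smul_mem' := by
    intro c x hx
    simp only [Set.mem_setOf_eq] at hx ⊢
    rw [map_smul_eq_mul, hx, mul_zero]

/-- If `F` is a VH-space over an admissible space `Z`, the space of
`S₀`-bounded operators `E → F` is complete for the operator seminorms `p̄`. -/
theorem statement3 {Z E F : Type*} [AddCommGroup Z] [Module ℂ Z] [UniformSpace Z]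
    [IsUniformAddGroup Z] [CompleteSpace Z]
    [AddCommGroup E] [Module ℂ E] [TopologicalSpace E]
    [AddCommGroup F] [Module ℂ F] [UniformSpace F] [IsUniformAddGroup F] [CompleteSpace F]
    (D : TopOrderedStarSpace Z)
    (BE : Gramian D.toOrderedStarData E) (BF : Gramian D.toOrderedStarData F)
    (S₀ : Set (Seminorm ℂ Z)) (hS₀ : ∀ p ∈ S₀, D.MemSStar p)
    (hS₀gen : GeneratesTopology S₀)
    (hE : BE.IsVETopology S₀) (hF : BF.IsVETopology S₀)
    (ι : Type*) [Nonempty ι] [Preorder ι] [IsDirected ι (· ≤ ·)]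
    (T : ι → (E →ₗ[ℂ] F))
    (hTb : ∀ i, ∀ p ∈ S₀, BE.BoundedFor BF (T i) p)
    (hcauchy : ∀ p ∈ S₀, ∀ ε : ℝ, 0 < ε → ∃ i₀ : ι, ∀ i j : ι, i₀ ≤ i → i₀ ≤ j →
      ∀ x : E, BF.tilde p (T i x - T j x) ≤ ε * BE.tilde p x) :
    ∃ L : E →ₗ[ℂ] F, (∀ p ∈ S₀, BE.BoundedFor BF L p) ∧
      ∀ p ∈ S₀, ∀ ε : ℝ, 0 < ε → ∃ i₀ : ι, ∀ i : ι, i₀ ≤ i →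
        ∀ x : E, BF.tilde p (T i x - L x) ≤ ε * BE.tilde p x := by
  classical
  obtain ⟨hneF, qF, hqF, hwsF⟩ := hF
  obtain ⟨hneS, hwsZ⟩ := hS₀gen
  haveI := hneF
  haveI : Filter.NeBot (Filter.atTop (α := ι)) :=
    Filter.atTop_neBot_iff.2 ⟨‹Nonempty ι›, ‹IsDirected ι (· ≤ ·)›⟩
  have htE : ∀ (p : Seminorm ℂ Z) (x : E), 0 ≤ BE.tilde p x := fun p x => Real.sqrt_nonneg _
  have htF : ∀ (p : Seminorm ℂ Z) (y : F), 0 ≤ BF.tilde p y := fun p y => Real.sqrt_nonneg _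
  -- separation on F
  haveI := D.t2
  have sep : ∀ v : F, (∀ P : ↥S₀, qF P v = 0) → v = 0 := by
    intro v hv
    have hz : BF.inner v v = 0 := by
      by_contra h
      obtain ⟨P, hP⟩ := hwsZ.separating_of_T1 (BF.inner v v) h
      have := hv P
      rw [hqF P v] at this
      unfold Gramian.tilde at this
      exact hP (Real.sqrt_eq_zero (apply_nonneg _ _) |>.mp this)
    exact BF.inner_self_eq_zero v hz
  -- for each x, the net (T i x) is Cauchy, hence converges
  have key : ∀ x : E, ∃ y : F, Filter.Tendsto (fun i => T i x) Filter.atTop (𝓝 y) := by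
    intro x
    have hcau : Cauchy (Filter.map (fun i => T i x) Filter.atTop) := by
      refine ⟨Filter.map_neBot, ?_⟩
      rw [Filter.prod_map_map_eq, uniformity_eq_comap_nhds_zero F, ← Filter.map_le_iff_le_comap,
        Filter.map_map]
      have : Filter.Tendsto (fun ij : ι × ι => T ij.2 x - T ij.1 x)
          (Filter.atTop ×ˢ Filter.atTop) (𝓝 0) := by
        rw [hwsF.tendsto_nhds]
        intro P ε hε
        set t := BE.tilde P.1 x with ht
        have htn : 0 ≤ t := htE _ _
        have hδ : 0 < ε / (t + 1) := div_pos hε (by linarith)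
        obtain ⟨i₀, hi₀⟩ := hcauchy P.1 P.2 _ hδ
        filter_upwards [(Filter.eventually_ge_atTop i₀).prod_mk
          (Filter.eventually_ge_atTop i₀)] with ij hij
        rw [sub_zero, hqF]
        calc BF.tilde P.1 (T ij.2 x - T ij.1 x) ≤ ε / (t + 1) * t :=
              hi₀ ij.2 ij.1 hij.2 hij.1 x
          _ < ε := by
              rw [div_mul_eq_mul_div, div_lt_iff₀ (by linarith : (0:ℝ) < t + 1)]
              nlinarith
      exact this
    obtain ⟨y, hy⟩ := CompleteSpace.complete hcau
    exact ⟨y, hy⟩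
  choose g hg using key
  -- uniqueness of limits
  have uniq : ∀ (u : ι → F) (a b : F), Filter.Tendsto u Filter.atTop (𝓝 a) →
      Filter.Tendsto u Filter.atTop (𝓝 b) → a = b := by
    intro u a b ha hb
    have : a - b = 0 := by
      refine sep _ fun P => ?_
      refine le_antisymm ?_ (apply_nonneg _ _)
      refine le_of_forall_pos_le_add ?_
      intro ε hε
      have h1 := (hwsF.tendsto_nhds u a).1 ha P (ε / 2) (by linarith)
      have h2 := (hwsF.tendsto_nhds u b).1 hb P (ε / 2) (by linarith)
      obtain ⟨i, hia, hib⟩ := (h1.and h2).exists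
      calc qF P (a - b) = qF P ((a - u i) + (u i - b)) := by rw [sub_add_sub_cancel]
        _ ≤ qF P (a - u i) + qF P (u i - b) := map_add_le_add _ _ _
        _ = qF P (u i - a) + qF P (u i - b) := by rw [map_sub_rev]
        _ ≤ ε / 2 + ε / 2 := add_le_add hia.le hib.le
        _ = 0 + ε := by ring
    exact sub_eq_zero.mp this
  -- the limit is linear
  have hadd : ∀ x y : E, g (x + y) = g x + g y := by
    intro x y
    refine uniq (fun i => T i (x + y)) _ _ (hg (x + y)) ?_
    have : (fun i => T i (x + y)) = fun i => T i x + T i y := by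
      funext i; exact map_add (T i) x y
    rw [this]
    exact (hg x).add (hg y)
  have hsmul : ∀ (a : ℂ) (x : E), g (a • x) = a • g x := by
    intro a x
    refine uniq (fun i => T i (a • x)) _ _ (hg (a • x)) ?_
    have he : (fun i => T i (a • x)) = fun i => a • T i x := by
      funext i; exact map_smul (T i) a x
    rw [he, hwsF.tendsto_nhds]
    intro P ε hε
    have hδ : 0 < ε / (‖a‖ + 1) := div_pos hε (by positivity)
    filter_upwards [(hwsF.tendsto_nhds (fun i => T i x) (g x)).1 (hg x) P _ hδ] with i hi
    rw [← smul_sub, map_smul_eq_mul]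
    calc ‖a‖ * qF P (T i x - g x) ≤ ‖a‖ * (ε / (‖a‖ + 1)) :=
          mul_le_mul_of_nonneg_left hi.le (norm_nonneg a)
      _ < ε := by
          have hn : (0:ℝ) ≤ ‖a‖ := norm_nonneg a
          rw [← mul_div_assoc, div_lt_iff₀ (by linarith : (0:ℝ) < ‖a‖ + 1)]
          nlinarith
  let L : E →ₗ[ℂ] F := ⟨⟨g, hadd⟩, hsmul⟩
  -- convergence estimate
  have conv : ∀ p ∈ S₀, ∀ ε : ℝ, 0 < ε → ∃ i₀ : ι, ∀ i : ι, i₀ ≤ i →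
      ∀ x : E, BF.tilde p (T i x - g x) ≤ ε * BE.tilde p x := by
    intro p hp ε hε
    obtain ⟨i₀, hi₀⟩ := hcauchy p hp ε hε
    refine ⟨i₀, fun i hi x => ?_⟩
    set P : ↥S₀ := ⟨p, hp⟩
    rw [← hqF P]
    have hten : Filter.Tendsto (fun j => qF P (T i x - T j x)) Filter.atTop
        (𝓝 (qF P (T i x - g x))) := by
      have h1 : Filter.Tendsto (fun j => T i x - T j x) Filter.atTop (𝓝 (T i x - g x)) :=
        Filter.Tendsto.sub tendsto_const_nhds (hg x)
      exact ((hwsF.continuous_seminorm P).tendsto _).comp h1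
    refine le_of_tendsto hten ?_
    filter_upwards [Filter.eventually_ge_atTop i₀] with j hj
    rw [hqF P]
    exact hi₀ i j hi hj x
  refine ⟨L, ?_, conv⟩
  intro p hp
  obtain ⟨i₀, hi₀⟩ := conv p hp 1 one_pos
  obtain ⟨C, hC0, hC⟩ := hTb i₀ p hp
  refine ⟨1 + C, by linarith, fun x => ?_⟩
  set P : ↥S₀ := ⟨p, hp⟩
  have : BF.tilde p (L x) = qF P (L x) := (hqF P _).symm
  rw [this]
  calc qF P (L x) = qF P ((L x - T i₀ x) + T i₀ x) := by rw [sub_add_cancel]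
    _ ≤ qF P (L x - T i₀ x) + qF P (T i₀ x) := map_add_le_add _ _ _
    _ = qF P (T i₀ x - L x) + qF P (T i₀ x) := by rw [map_sub_rev]
    _ = BF.tilde p (T i₀ x - L x) + BF.tilde p (T i₀ x) := by rw [hqF P, hqF P]
    _ ≤ 1 * BE.tilde p x + C * BE.tilde p x := add_le_add (hi₀ i₀ le_rfl x) (hC x)
    _ = (1 + C) * BE.tilde p x := by ring
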